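/- For every M > 0 there exists a polynomial P : ℝ → ℝ that is nonnegative, nondecreasing and convex on [0,1], such that, setting G(z) = ∫₀^z P(u) du, for every maximizer x* ∈ [0,1] of the function x ↦ x·(P(1−x) − P(x)) one has G(1)/2 − (G(1 − x*) + G(x*))/2 > 0 and G(1)/2 − G(1/2) > M · (G(1)/2 − (G(1 − x*) + G(x*))/2). Hence the Price of Anarchy is unbounded even over convex polynomial price functions. -/

import Mathlib

open intervalIntegral MeasureTheory

open Finset

/- ### Auxiliary lemmas -/

lemma poa_key (n : ℕ) (x : ℝ) : x * (∑ j ∈ range n, (1-x)^j) = 1 - (1-x)^n := by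
  have h := geom_sum_mul (1-x) n
  have h2 : (1-x) - 1 = -x := by ring
  rw [h2] at h
  nlinarith [h]

lemma poa_ge_one (n : ℕ) (hn : 1 ≤ n) (x : ℝ) (hx : 0 ≤ x) :
    1 ≤ ∑ j ∈ range n, x^j := by
  have h0 : (1:ℝ) = ∑ j ∈ range 1, x^j := by simp
  rw [h0]
  apply Finset.sum_le_sum_of_subset_of_nonneg
  · exact Finset.range_subset_range.mpr hn
  · intro i _ _; positivity

lemma poa_le_two (n : ℕ) (x : ℝ) (hx : 0 ≤ x) (hx2 : x ≤ 1/2) :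
    (∑ j ∈ range n, x^j) ≤ 2 := by
  have h1 : (∑ j ∈ range n, x^j) ≤ ∑ j ∈ range n, (1/2:ℝ)^j := by
    apply Finset.sum_le_sum
    intro i _
    exact pow_le_pow_left₀ hx hx2 i
  have h2 := geom_sum_mul (1/2 : ℝ) n
  have h3 : (0:ℝ) ≤ (1/2:ℝ)^n := by positivity
  nlinarith

lemma poa_half (k : ℕ) (hk : 1 ≤ k) : (1 - 1/(k:ℝ))^k ≤ 1/2 := by
  have hk0 : (0:ℝ) < k := by exact_mod_cast hk
  have hk1 : 1/(k:ℝ) ≤ 1 := by rw [div_le_one hk0]; exact_mod_cast hk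
  have hkp : (0:ℝ) ≤ 1/(k:ℝ) := by positivity
  have hy : (0:ℝ) ≤ 1 - 1/(k:ℝ) := by linarith
  have h1 : (2:ℝ) ≤ (1 + 1/(k:ℝ))^k := by
    have := one_add_mul_le_pow (a := 1/(k:ℝ)) (by linarith) k
    rw [mul_one_div, div_self (ne_of_gt hk0)] at this
    linarith
  have h2 : (1 - 1/(k:ℝ))^k * (1 + 1/(k:ℝ))^k ≤ 1 := by
    rw [← mul_pow]
    apply pow_le_one₀ (by nlinarith) (by nlinarith)
  have h3 : (0:ℝ) ≤ (1 - 1/(k:ℝ))^k := pow_nonneg hy k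
  nlinarith

lemma poa_exp (s a : ℕ) (hs : s ≤ a) :
    (1 - (1/2:ℝ)^s)^(2^a) ≤ (1/2:ℝ)^(2^(a-s)) := by
  have hk : (1:ℝ)/(2^s:ℕ) = (1/2:ℝ)^s := by
    push_cast; rw [one_div, one_div, inv_pow]
  have hhalf : (1 - (1/2:ℝ)^s)^(2^s) ≤ 1/2 := by
    rw [← hk]; exact poa_half (2^s) (Nat.one_le_two_pow)
  have hbase : (0:ℝ) ≤ 1 - (1/2:ℝ)^s := by
    have : (1/2:ℝ)^s ≤ 1 := pow_le_one₀ (by norm_num) (by norm_num)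
    linarith
  have hsplit : (2:ℕ)^a = 2^s * 2^(a-s) := by
    rw [← pow_add]; congr 1; omega
  calc (1 - (1/2:ℝ)^s)^(2^a) = ((1 - (1/2:ℝ)^s)^(2^s))^(2^(a-s)) := by
        rw [← pow_mul, ← hsplit]
    _ ≤ (1/2:ℝ)^(2^(a-s)) := pow_le_pow_left₀ (pow_nonneg hbase _) hhalf _

lemma poa_term_nonneg (j : ℕ) (x : ℝ) (hx : 0 ≤ x) (hx1 : x ≤ 1) :
    0 ≤ 1 - (1-x)^(j+1) - x^(j+1) := by
  have h1 : (1-x)^(j+1) ≤ 1-x := pow_le_of_le_one (by linarith) (by linarith) (by omega)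
  have h2 : x^(j+1) ≤ x := pow_le_of_le_one hx hx1 (by omega)
  linarith

lemma poa_term_le_one (j : ℕ) (x : ℝ) (hx : 0 ≤ x) (hx1 : x ≤ 1) :
    1 - (1-x)^(j+1) - x^(j+1) ≤ 1 := by
  have h1 : (0:ℝ) ≤ (1-x)^(j+1) := pow_nonneg (by linarith) _
  have h2 : (0:ℝ) ≤ x^(j+1) := pow_nonneg hx _
  linarith

lemma poa_term_le_jx (j : ℕ) (x : ℝ) (hx : 0 ≤ x) (hx1 : x ≤ 1) :
    1 - (1-x)^(j+1) - x^(j+1) ≤ ((j:ℝ)+1) * x := by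
  have h := one_add_mul_le_pow (a := -x) (by linarith) (j+1)
  rw [show (1:ℝ) + -x = 1 - x from by ring] at h
  have h2 : (0:ℝ) ≤ x^(j+1) := pow_nonneg hx _
  push_cast at h ⊢
  linarith

noncomputable def poaS (n : ℕ) : ℝ := ∑ j ∈ range n, (1:ℝ)/((j:ℝ)+1)

lemma poaS_eq_harmonic (n : ℕ) : poaS n = (harmonic n : ℝ) := by
  unfold poaS harmonic
  push_cast
  apply Finset.sum_congr rfl
  intro j _
  rw [one_div]

lemma poaS_lower (a : ℕ) : (a:ℝ) * Real.log 2 ≤ poaS (2^a) := by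
  rw [poaS_eq_harmonic]
  calc (a:ℝ) * Real.log 2 = Real.log ((2:ℝ)^a) := (Real.log_pow 2 a).symm
    _ ≤ Real.log ((2^a : ℕ) + 1) := by
        apply Real.log_le_log (by positivity)
        push_cast; linarith
    _ ≤ (harmonic (2^a) : ℝ) := by
        have := log_add_one_le_harmonic (2^a)
        push_cast at this ⊢
        exact this

lemma poaS_upper (a : ℕ) : poaS (2^a) ≤ 1 + (a:ℝ) * Real.log 2 := by
  rw [poaS_eq_harmonic]
  have h := harmonic_le_one_add_log (2^a)
  have h2 : Real.log ((2^a : ℕ) : ℝ) = (a:ℝ) * Real.log 2 := by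
    push_cast
    exact Real.log_pow 2 a
  rw [h2] at h
  exact h

lemma poa_convex (n : ℕ) : ConvexOn ℝ (Set.Icc (0:ℝ) 1) (fun z => ∑ j ∈ range n, z^j) := by
  induction n with
  | zero => simpa using convexOn_const (0:ℝ) (convex_Icc (0:ℝ) 1)
  | succ m ih =>
    have h : ConvexOn ℝ (Set.Icc (0:ℝ) 1) (fun z : ℝ => z^m) :=
      (convexOn_pow m).subset (Set.Icc_subset_Ici_self) (convex_Icc 0 1)
    simp only [Finset.sum_range_succ]
    exact ih.add h

lemma poa_integral (n : ℕ) (t : ℝ) :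
    (∫ u in (0:ℝ)..t, ∑ j ∈ range n, u^j) = ∑ j ∈ range n, t^(j+1)/((j:ℝ)+1) := by
  rw [intervalIntegral.integral_finset_sum]
  · apply Finset.sum_congr rfl
    intro j _
    rw [integral_pow]
    norm_num
  · intro j _
    exact (continuous_pow j).intervalIntegrable 0 t

lemma poa_eval (n : ℕ) (z : ℝ) :
    (∑ j ∈ range n, (Polynomial.X : Polynomial ℝ)^j).eval z = ∑ j ∈ range n, z^j := by
  simp [Polynomial.eval_finset_sum]

set_option maxHeartbeats 1000000 in
lemma poa_main (M : ℝ) (hM : 0 < M) (a b : ℕ) (hb2 : 2 ≤ b) (hba : b + 1 ≤ a)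
    (hsb : a - b + 2 ≤ 2 ^ (b - 2))
    (hnum : 2 + 4 * M * ((b:ℝ) + 2) < (a:ℝ)) :
    ∃ P : Polynomial ℝ,
      (∀ z ∈ Set.Icc (0 : ℝ) 1, 0 ≤ P.eval z) ∧
      MonotoneOn (fun z => P.eval z) (Set.Icc (0 : ℝ) 1) ∧
      ConvexOn ℝ (Set.Icc (0 : ℝ) 1) (fun z => P.eval z) ∧
      ∀ xstar ∈ Set.Icc (0 : ℝ) 1,
        (∀ x ∈ Set.Icc (0 : ℝ) 1,
          x * (P.eval (1 - x) - P.eval x) ≤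
            xstar * (P.eval (1 - xstar) - P.eval xstar)) →
        0 < (∫ u in (0:ℝ)..1, P.eval u) / 2 -
            ((∫ u in (0:ℝ)..(1 - xstar), P.eval u) +
              (∫ u in (0:ℝ)..xstar, P.eval u)) / 2 ∧
        (∫ u in (0:ℝ)..1, P.eval u) / 2 - (∫ u in (0:ℝ)..(1/2 : ℝ), P.eval u) >
          M * ((∫ u in (0:ℝ)..1, P.eval u) / 2 -
            ((∫ u in (0:ℝ)..(1 - xstar), P.eval u) +
              (∫ u in (0:ℝ)..xstar, P.eval u)) / 2) := by
  classical
  set n : ℕ := 2^a with hn_def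
  set K : ℕ := 2^(a-b) with hK_def
  set s : ℕ := a - b + 2 with hs_def
  set xb : ℝ := (1/2:ℝ)^(a-b) with hxb_def
  set x0 : ℝ := (1/2:ℝ)^s with hx0_def
  have hL1 : Real.log 2 < 1 := by
    have := Real.log_two_lt_d9; linarith
  have hL2 : (1/2:ℝ) < Real.log 2 := by
    have := Real.log_two_gt_d9; linarith
  have ha1 : 1 ≤ a := by omega
  have hn2 : 2 ≤ n := by
    calc 2 = 2^1 := rfl
    _ ≤ 2^a := Nat.pow_le_pow_right (by norm_num) ha1
  have hx0pos : 0 < x0 := by positivity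
  have hxbpos : 0 < xb := by positivity
  have hx0xb : x0 = xb / 4 := by
    rw [hx0_def, hxb_def, hs_def, pow_add]
    ring
  have hxbhalf : xb ≤ 1/2 := by
    rw [hxb_def]
    calc (1/2:ℝ)^(a-b) ≤ (1/2:ℝ)^1 :=
      pow_le_pow_of_le_one (by norm_num) (by norm_num) (by omega)
    _ = 1/2 := pow_one _
  have hx0half : x0 ≤ 1/2 := by rw [hx0xb]; linarith
  -- the polynomial
  refine ⟨∑ j ∈ range n, Polynomial.X^j, ?_, ?_, ?_, ?_⟩
  · intro z hz
    rw [poa_eval]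
    exact Finset.sum_nonneg fun j _ => pow_nonneg hz.1 j
  · intro z hz y hy hzy
    simp only [poa_eval]
    exact Finset.sum_le_sum fun i _ => pow_le_pow_left₀ hz.1 hzy i
  · have hfun : (fun z => (∑ j ∈ range n, (Polynomial.X : Polynomial ℝ)^j).eval z)
        = fun z : ℝ => ∑ j ∈ range n, z^j := funext fun z => poa_eval n z
    rw [hfun]
    exact poa_convex n
  intro x hx hmax
  -- rewrite the integrals
  have hg : ∀ t : ℝ, (∫ u in (0:ℝ)..t, (∑ j ∈ range n, (Polynomial.X : Polynomial ℝ)^j).eval u)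
      = ∑ j ∈ range n, t^(j+1)/((j:ℝ)+1) := by
    intro t
    rw [show (fun u : ℝ => (∑ j ∈ range n, (Polynomial.X : Polynomial ℝ)^j).eval u)
        = fun u : ℝ => ∑ j ∈ range n, u^j from funext fun u => poa_eval n u]
    exact poa_integral n t
  simp only [hg]
  -- profit inequalities
  have hπx0 : 1 - 3*x0 ≤ x0 * ((∑ j ∈ range n, (1-x0)^j) - (∑ j ∈ range n, x0^j)) := by
    have hkey := poa_key n x0
    have hexp : (1-x0)^n ≤ x0 := by
      have h1 : (1 - (1/2:ℝ)^s)^(2^a) ≤ (1/2:ℝ)^(2^(a-s)) :=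
        poa_exp s a (by omega)
      have h2 : a - s = b - 2 := by omega
      rw [h2] at h1
      have h3 : (1/2:ℝ)^(2^(b-2)) ≤ (1/2:ℝ)^s :=
        pow_le_pow_of_le_one (by norm_num) (by norm_num) hsb
      calc (1-x0)^n = (1 - (1/2:ℝ)^s)^(2^a) := by rw [hx0_def, hn_def]
      _ ≤ (1/2:ℝ)^(2^(b-2)) := le_trans h1 (le_refl _)
      _ ≤ x0 := h3
    have hple : (∑ j ∈ range n, x0^j) ≤ 2 := poa_le_two n x0 (le_of_lt hx0pos) hx0half
    have h4 : x0 * (∑ j ∈ range n, x0^j) ≤ x0 * 2 :=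
      mul_le_mul_of_nonneg_left hple (le_of_lt hx0pos)
    have h5 : x0 * ((∑ j ∈ range n, (1-x0)^j) - (∑ j ∈ range n, x0^j))
        = (1 - (1-x0)^n) - x0 * (∑ j ∈ range n, x0^j) := by
      rw [mul_sub, hkey]
    rw [h5]
    linarith
  have hπx : x * ((∑ j ∈ range n, (1-x)^j) - (∑ j ∈ range n, x^j)) ≤ 1 - x := by
    have hkey := poa_key n x
    have hp1 : 1 ≤ ∑ j ∈ range n, x^j := poa_ge_one n (le_trans (by norm_num) hn2) x hx.1
    have h4 : x * 1 ≤ x * (∑ j ∈ range n, x^j) := mul_le_mul_of_nonneg_left hp1 hx.1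
    have h6 : (0:ℝ) ≤ (1-x)^n := pow_nonneg (by linarith [hx.2]) n
    have h5 : x * ((∑ j ∈ range n, (1-x)^j) - (∑ j ∈ range n, x^j))
        = (1 - (1-x)^n) - x * (∑ j ∈ range n, x^j) := by
      rw [mul_sub, hkey]
    rw [h5]
    linarith
  have hmax0 := hmax x0 ⟨le_of_lt hx0pos, by linarith⟩
  simp only [poa_eval] at hmax0
  -- location of the maximizer
  have hxub : x ≤ (3/4) * xb := by
    have : 1 - 3*x0 ≤ 1 - x := le_trans hπx0 (le_trans hmax0 hπx)
    rw [hx0xb] at this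
    linarith
  have hxpos : 0 < x := by
    rcases lt_or_eq_of_le hx.1 with h | h
    · exact h
    · exfalso
      have h0 : x * ((∑ j ∈ range n, (1-x)^j) - (∑ j ∈ range n, x^j)) = 0 := by
        rw [← h]; ring
      have := le_trans hπx0 hmax0
      rw [h0] at this
      rw [hx0xb] at this
      linarith
  have hx1 : x < 1 := by linarith
  -- the sum identity for D
  have hDsum : (∑ j ∈ range n, (1:ℝ)^(j+1)/((j:ℝ)+1))
      - ((∑ j ∈ range n, (1-x)^(j+1)/((j:ℝ)+1)) + (∑ j ∈ range n, x^(j+1)/((j:ℝ)+1)))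
      = ∑ j ∈ range n, (1 - (1-x)^(j+1) - x^(j+1))/((j:ℝ)+1) := by
    rw [← Finset.sum_add_distrib, ← Finset.sum_sub_distrib]
    apply Finset.sum_congr rfl
    intro j _
    rw [one_pow]
    ring
  -- positivity of D
  have hDpos : 0 < ∑ j ∈ range n, (1 - (1-x)^(j+1) - x^(j+1))/((j:ℝ)+1) := by
    have h1mem : (1:ℕ) ∈ range n := Finset.mem_range.mpr hn2
    have hnn : ∀ j ∈ range n, 0 ≤ (1 - (1-x)^(j+1) - x^(j+1))/((j:ℝ)+1) :=
      fun j _ => div_nonneg (poa_term_nonneg j x hx.1 hx.2) (by positivity)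
    have hge := Finset.single_le_sum hnn h1mem
    norm_num at hge
    nlinarith [hge, mul_pos hxpos (show (0:ℝ) < 1 - x by linarith)]
  -- upper bound on D
  have hKn : K ≤ n := Nat.pow_le_pow_right (by norm_num) (by omega)
  have hDub : (∑ j ∈ range n, (1 - (1-x)^(j+1) - x^(j+1))/((j:ℝ)+1))
      ≤ 2 + (b:ℝ) * Real.log 2 := by
    have hsplit : (∑ j ∈ range n, (1 - (1-x)^(j+1) - x^(j+1))/((j:ℝ)+1))
        = (∑ j ∈ range K, (1 - (1-x)^(j+1) - x^(j+1))/((j:ℝ)+1))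
          + ∑ j ∈ Ico K n, (1 - (1-x)^(j+1) - x^(j+1))/((j:ℝ)+1) := by
      simp only [range_eq_Ico]
      rw [← Finset.sum_Ico_consecutive _ (Nat.zero_le K) hKn]
    have hb1 : (∑ j ∈ range K, (1 - (1-x)^(j+1) - x^(j+1))/((j:ℝ)+1)) ≤ 1 := by
      have heach : ∀ j ∈ range K, (1 - (1-x)^(j+1) - x^(j+1))/((j:ℝ)+1) ≤ xb := by
        intro j _
        rw [div_le_iff₀ (by positivity)]
        calc (1 - (1-x)^(j+1) - x^(j+1)) ≤ ((j:ℝ)+1) * x :=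
          poa_term_le_jx j x hx.1 hx.2
        _ ≤ ((j:ℝ)+1) * xb := by
            apply mul_le_mul_of_nonneg_left (by linarith) (by positivity)
        _ = xb * ((j:ℝ)+1) := by ring
      calc (∑ j ∈ range K, (1 - (1-x)^(j+1) - x^(j+1))/((j:ℝ)+1))
          ≤ ∑ _j ∈ range K, xb := Finset.sum_le_sum heach
      _ = (K:ℝ) * xb := by rw [Finset.sum_const, card_range, nsmul_eq_mul]
      _ = 1 := by
          rw [hK_def, hxb_def]
          push_cast
          rw [← mul_pow]
          norm_num
    have hb2' : (∑ j ∈ Ico K n, (1 - (1-x)^(j+1) - x^(j+1))/((j:ℝ)+1))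
        ≤ poaS n - poaS K := by
      have heq : poaS n - poaS K = ∑ j ∈ Ico K n, (1:ℝ)/((j:ℝ)+1) := by
        unfold poaS
        simp only [range_eq_Ico]
        rw [← Finset.sum_Ico_consecutive _ (Nat.zero_le K) hKn]
        ring
      rw [heq]
      apply Finset.sum_le_sum
      intro j _
      apply div_le_div_of_nonneg_right ?_ (by positivity)
      · exact poa_term_le_one j x hx.1 hx.2
    have hS1 : poaS n ≤ 1 + (a:ℝ) * Real.log 2 := by rw [hn_def]; exact poaS_upper a
    have hS2 : ((a:ℝ) - (b:ℝ)) * Real.log 2 ≤ poaS K := by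
      rw [hK_def]
      have := poaS_lower (a-b)
      have hcast : (((a-b : ℕ)):ℝ) = (a:ℝ) - (b:ℝ) := by
        push_cast [Nat.cast_sub (by omega : b ≤ a)]
        ring
      rw [hcast] at this
      exact this
    rw [hsplit]
    have : poaS n - poaS K ≤ 1 + (b:ℝ) * Real.log 2 := by nlinarith
    linarith
  -- lower bound on C
  have hCsum : (∑ j ∈ range n, (1:ℝ)^(j+1)/((j:ℝ)+1)) / 2
      - (∑ j ∈ range n, (1/2:ℝ)^(j+1)/((j:ℝ)+1))
      = (∑ j ∈ range n, (1 - (1/2:ℝ)^j)/((j:ℝ)+1)) / 2 := by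
    rw [Finset.sum_div, Finset.sum_div, ← Finset.sum_sub_distrib]
    apply Finset.sum_congr rfl
    intro j _
    rw [one_pow, pow_succ]
    ring
  have hClb : ((a:ℝ) * Real.log 2 - 1)/2 ≤ ∑ j ∈ range n, (1 - (1/2:ℝ)^j)/((j:ℝ)+1) := by
    have hsplit : (∑ j ∈ range n, (1 - (1/2:ℝ)^j)/((j:ℝ)+1))
        = (∑ j ∈ range 1, (1 - (1/2:ℝ)^j)/((j:ℝ)+1))
          + ∑ j ∈ Ico 1 n, (1 - (1/2:ℝ)^j)/((j:ℝ)+1) := by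
      simp only [range_eq_Ico]
      rw [← Finset.sum_Ico_consecutive _ (Nat.zero_le 1) (le_trans (by norm_num) hn2)]
    have hfirst : (∑ j ∈ range 1, (1 - (1/2:ℝ)^j)/((j:ℝ)+1)) = 0 := by norm_num
    have hsec : (∑ j ∈ Ico 1 n, ((1:ℝ)/2)/((j:ℝ)+1))
        ≤ ∑ j ∈ Ico 1 n, (1 - (1/2:ℝ)^j)/((j:ℝ)+1) := by
      apply Finset.sum_le_sum
      intro j hj
      apply div_le_div_of_nonneg_right ?_ (by positivity)
      · have hj1 : 1 ≤ j := (Finset.mem_Ico.mp hj).1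
        have : (1/2:ℝ)^j ≤ (1/2:ℝ)^1 :=
          pow_le_pow_of_le_one (by norm_num) (by norm_num) hj1
        norm_num at this ⊢
        linarith
    have hval : (∑ j ∈ Ico 1 n, ((1:ℝ)/2)/((j:ℝ)+1)) = (poaS n - 1)/2 := by
      have heq : poaS n - poaS 1 = ∑ j ∈ Ico 1 n, (1:ℝ)/((j:ℝ)+1) := by
        unfold poaS
        simp only [range_eq_Ico]
        rw [← Finset.sum_Ico_consecutive _ (Nat.zero_le 1) (le_trans (by norm_num) hn2)]
        ring
      have hp1 : poaS 1 = 1 := by unfold poaS; norm_num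
      have hh : (∑ j ∈ Ico 1 n, ((1:ℝ)/2)/((j:ℝ)+1))
          = (∑ j ∈ Ico 1 n, (1:ℝ)/((j:ℝ)+1))/2 := by
        rw [Finset.sum_div]
        exact Finset.sum_congr rfl fun j _ => by ring
      rw [hh, ← heq, hp1]
    have hSlow : (a:ℝ) * Real.log 2 ≤ poaS n := by rw [hn_def]; exact poaS_lower a
    rw [hsplit, hfirst, zero_add]
    calc ((a:ℝ) * Real.log 2 - 1)/2 ≤ (poaS n - 1)/2 := by linarith
    _ = ∑ j ∈ Ico 1 n, ((1:ℝ)/2)/((j:ℝ)+1) := hval.symm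
    _ ≤ _ := hsec
  -- conclude
  have hDeq : (∑ j ∈ range n, (1:ℝ)^(j+1)/((j:ℝ)+1)) / 2
      - ((∑ j ∈ range n, (1-x)^(j+1)/((j:ℝ)+1)) + (∑ j ∈ range n, x^(j+1)/((j:ℝ)+1))) / 2
      = (∑ j ∈ range n, (1 - (1-x)^(j+1) - x^(j+1))/((j:ℝ)+1)) / 2 := by
    rw [div_sub_div_same, hDsum]
  constructor
  · rw [hDeq]
    linarith [hDpos]
  · rw [hDeq, hCsum]
    have hD2 : M * ((∑ j ∈ range n, (1 - (1-x)^(j+1) - x^(j+1))/((j:ℝ)+1)) / 2)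
        ≤ M * ((2 + (b:ℝ) * Real.log 2)/2) := by
      apply mul_le_mul_of_nonneg_left (by linarith) (le_of_lt hM)
    have hfinal : M * ((2 + (b:ℝ) * Real.log 2)/2) < ((a:ℝ) * Real.log 2 - 1)/2/2 := by
      have e0 : (b:ℝ) * Real.log 2 ≤ (b:ℝ) := by
        have h := mul_le_mul_of_nonneg_left (le_of_lt hL1) (Nat.cast_nonneg (α := ℝ) b)
        simpa using h
      have e1 : M * ((b:ℝ) * Real.log 2) ≤ M * (b:ℝ) :=
        mul_le_mul_of_nonneg_left e0 (le_of_lt hM)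
      have e2 : (a:ℝ) * (1/2) ≤ (a:ℝ) * Real.log 2 :=
        mul_le_mul_of_nonneg_left (le_of_lt hL2) (Nat.cast_nonneg (α := ℝ) a)
      linarith
    calc M * ((∑ j ∈ range n, (1 - (1-x)^(j+1) - x^(j+1))/((j:ℝ)+1)) / 2)
        ≤ M * ((2 + (b:ℝ) * Real.log 2)/2) := hD2
      _ < ((a:ℝ) * Real.log 2 - 1)/2/2 := hfinal
      _ ≤ (∑ j ∈ range n, (1 - (1/2:ℝ)^j)/((j:ℝ)+1)) / 2 := by linarith

lemma poa_nat (u : ℕ) : 6 ≤ u → 2*u + 6 ≤ 2^u := by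
  induction u with
  | zero => intro h; omega
  | succ v ih =>
    intro h
    rcases Nat.lt_or_ge v 6 with hv | hv
    · have hv5 : v = 5 := by omega
      subst hv5; norm_num
    · have h3 := ih hv
      calc 2*(v+1) + 6 = (2*v + 6) + 2 := by ring
        _ ≤ 2^v + 2^v := Nat.add_le_add h3 (le_trans (by omega) h3)
        _ = 2^(v+1) := by rw [pow_succ]; ring



/-- Unbounded Price of Anarchy even for convex polynomial price functions:
for every `M > 0` there is a polynomial `P` that is nonnegative, nondecreasing
and convex on `[0,1]` such that, with `G(z) = ∫₀^z P(u) du`, every maximizer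
`x* ∈ [0,1]` of the profit `x ↦ x·(P(1−x) − P(x))` yields a positive
decentralized welfare improvement `G(1)/2 − (G(1−x*) + G(x*))/2` that is less
than `1/M` times the centralized improvement `G(1)/2 − G(1/2)`. -/
theorem stmt6 (M : ℝ) (hM : 0 < M) :
    ∃ P : Polynomial ℝ,
      (∀ z ∈ Set.Icc (0 : ℝ) 1, 0 ≤ P.eval z) ∧
      MonotoneOn (fun z => P.eval z) (Set.Icc (0 : ℝ) 1) ∧
      ConvexOn ℝ (Set.Icc (0 : ℝ) 1) (fun z => P.eval z) ∧
      ∀ xstar ∈ Set.Icc (0 : ℝ) 1,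
        (∀ x ∈ Set.Icc (0 : ℝ) 1,
          x * (P.eval (1 - x) - P.eval x) ≤
            xstar * (P.eval (1 - xstar) - P.eval xstar)) →
        0 < (∫ u in (0:ℝ)..1, P.eval u) / 2 -
            ((∫ u in (0:ℝ)..(1 - xstar), P.eval u) +
              (∫ u in (0:ℝ)..xstar, P.eval u)) / 2 ∧
        (∫ u in (0:ℝ)..1, P.eval u) / 2 - (∫ u in (0:ℝ)..(1/2 : ℝ), P.eval u) >
          M * ((∫ u in (0:ℝ)..1, P.eval u) / 2 -
            ((∫ u in (0:ℝ)..(1 - xstar), P.eval u) +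
              (∫ u in (0:ℝ)..xstar, P.eval u)) / 2) := by

  have hM'1 : (1:ℝ) ≤ max M 1 := le_max_right M 1
  have hMM' : M ≤ max M 1 := le_max_left M 1
  obtain ⟨u₀, hu₀⟩ := pow_unbounded_of_one_lt (R := ℝ) (4 * max M 1) one_lt_two
  have hu6 : 6 ≤ max u₀ 6 := le_max_right u₀ 6
  have hu₀le : u₀ ≤ max u₀ 6 := le_max_left u₀ 6
  set u : ℕ := max u₀ 6 with hu_def
  have hc1 : 4 * max M 1 < (2:ℝ)^u := by
    calc 4 * max M 1 < (2:ℝ)^u₀ := hu₀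
    _ ≤ (2:ℝ)^u := by
        apply pow_le_pow_right₀ one_le_two hu₀le
  have h1 : 2*u + 6 ≤ 2^u := poa_nat u hu6
  have h2 : (2:ℕ)^u ≤ 2^(2*u) := Nat.pow_le_pow_right (by norm_num) (by omega)
  have hba : (2*u+2) + 1 ≤ 2^(2*u) := by
    calc (2*u+2)+1 ≤ 2*u+6 := by omega
    _ ≤ 2^u := h1
    _ ≤ 2^(2*u) := h2
  have hsb : 2^(2*u) - (2*u+2) + 2 ≤ 2^((2*u+2) - 2) := by
    have e : (2*u+2) - 2 = 2*u := by omega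
    rw [e]
    have hba' := hba
    generalize (2:ℕ)^(2*u) = A at hba' ⊢
    omega
  have hnum : 2 + 4*M*(((2*u+2:ℕ):ℝ) + 2) < (((2^(2*u) : ℕ)) : ℝ) := by
    have c3 : (((2^(2*u) : ℕ)) : ℝ) = (2:ℝ)^u * (2:ℝ)^u := by
      push_cast
      rw [two_mul, pow_add]
    have c2 : 2*(u:ℝ) + 6 ≤ (2:ℝ)^u := by exact_mod_cast h1
    have ht0 : (0:ℝ) ≤ (2:ℝ)^u := by positivity
    have c5 : (2*(u:ℝ)+6) * (4*max M 1) ≤ (2*(u:ℝ)+6) * ((2:ℝ)^u) :=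
      mul_le_mul_of_nonneg_left (le_of_lt hc1) (by positivity)
    have c6 : (2*(u:ℝ)+6) * ((2:ℝ)^u) ≤ (2:ℝ)^u * (2:ℝ)^u :=
      mul_le_mul_of_nonneg_right c2 ht0
    have hprod : (u:ℝ)*M ≤ (u:ℝ)*(max M 1) :=
      mul_le_mul_of_nonneg_left hMM' (Nat.cast_nonneg u)
    rw [c3]
    push_cast
    nlinarith [c5, c6, hprod, hM'1, hMM', hM]
  exact poa_main M hM (2^(2*u)) (2*u+2) (by omega) hba hsb hnum
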